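/- With the GLM notation below and assuming additionally 0 < μ̇_min ≤ μ'(u) ≤ μ̇_max for all u ∈ ℝ, define G_t = Σ_{l=1}^t X_l X_lᵀ + (λ/μ̇_min)·I_d. Then for all θ, θ', θ'' ∈ ℝ^d, ‖θ − θ'‖_{H(θ'')} ≤ μ̇_max^{1/2}·μ̇_min^{−1}·‖f_t(θ) − f_t(θ')‖_{G_t⁻¹}. -/

import Mathlib

open Matrix

section aux
variable {d : ℕ}

lemma my_sum_mulVec {t : ℕ} (A : Fin t → Matrix (Fin d) (Fin d) ℝ) (v : Fin d → ℝ) :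
    (∑ l, A l) *ᵥ v = ∑ l, A l *ᵥ v := by
  ext i
  simp [Matrix.mulVec, dotProduct, Matrix.sum_apply, Finset.sum_mul]
  exact Finset.sum_comm

lemma my_dot_sum {t : ℕ} (w : Fin d → ℝ) (u : Fin t → Fin d → ℝ) :
    w ⬝ᵥ (∑ l, u l) = ∑ l, w ⬝ᵥ u l := by
  simp [dotProduct, Finset.sum_apply, Finset.mul_sum]
  exact Finset.sum_comm

lemma my_sum_dot {t : ℕ} (u : Fin t → Fin d → ℝ) (w : Fin d → ℝ) :
    (∑ l, u l) ⬝ᵥ w = ∑ l, u l ⬝ᵥ w := by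
  rw [dotProduct_comm, my_dot_sum]
  exact Finset.sum_congr rfl fun l _ => dotProduct_comm _ _

lemma my_vecMulVec_mulVec (x v : Fin d → ℝ) :
    vecMulVec x x *ᵥ v = (x ⬝ᵥ v) • x := by
  ext i
  simp only [Matrix.mulVec, dotProduct, vecMulVec_apply, Pi.smul_apply, smul_eq_mul,
    Finset.mul_sum]
  rw [Finset.sum_mul]
  exact Finset.sum_congr rfl fun j _ => by ring

lemma my_vecMulVec_transpose (x : Fin d → ℝ) :
    (vecMulVec x x)ᵀ = vecMulVec x x := by
  ext i j
  simp [vecMulVec_apply, transpose_apply, mul_comm]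

lemma quad_expand {t : ℕ} (c : Fin t → ℝ) (X : Fin t → Fin d → ℝ) (r : ℝ) (x : Fin d → ℝ) :
    x ⬝ᵥ (∑ l, c l • vecMulVec (X l) (X l) + r • (1 : Matrix (Fin d) (Fin d) ℝ)) *ᵥ x
      = (∑ l, c l * (X l ⬝ᵥ x) ^ 2) + r * (x ⬝ᵥ x) := by
  rw [add_mulVec, my_sum_mulVec, dotProduct_add, my_dot_sum]
  congr 1
  · refine Finset.sum_congr rfl fun l _ => ?_
    rw [smul_mulVec, my_vecMulVec_mulVec, dotProduct_smul, dotProduct_smul,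
      smul_eq_mul, smul_eq_mul, dotProduct_comm x (X l)]
    ring
  · rw [smul_mulVec, one_mulVec, dotProduct_smul, smul_eq_mul]

lemma mono_aux (μ : ℝ → ℝ) (hdiff : Differentiable ℝ μ) (μmin : ℝ)
    (hb : ∀ u, μmin ≤ deriv μ u) (a b : ℝ) :
    μmin * (a - b) ^ 2 ≤ (μ a - μ b) * (a - b) := by
  have hdf : Differentiable ℝ (fun u : ℝ => μ u - μmin * u) := by fun_prop
  have hg : Monotone (fun u : ℝ => μ u - μmin * u) := by
    apply monotone_of_deriv_nonneg hdf
    intro x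
    have hd : deriv (fun u : ℝ => μ u - μmin * u) x = deriv μ x - μmin := by
      rw [deriv_fun_sub (hdiff x) (by fun_prop)]
      have : deriv (fun u : ℝ => μmin * u) x = μmin := by
        simpa using ((hasDerivAt_id x).const_mul μmin).deriv
      simp only [this]
    rw [hd]
    linarith [hb x]
  rcases le_total a b with h | h
  · have h2 := hg h
    simp only at h2
    nlinarith
  · have h2 := hg h
    simp only at h2
    nlinarith

end aux

/-- GLM distance bound via the auxiliary design matrix `G_t`:
`‖θ − θ'‖_{H(θ'')} ≤ μ̇_max^{1/2}·μ̇_min^{−1}·‖f_t(θ) − f_t(θ')‖_{G_t⁻¹}`. -/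
theorem dist_H_le_grad_diff_Gt
    {d t : ℕ} (M lam : ℝ) (hM : 0 < M) (hlam : 0 < lam)
    (μ : ℝ → ℝ) (hdiff : Differentiable ℝ μ) (hdiff2 : Differentiable ℝ (deriv μ))
    (hpos : ∀ u : ℝ, 0 < deriv μ u)
    (hsc : ∀ u : ℝ, |deriv (deriv μ) u| ≤ M * deriv μ u)
    (μmin μmax : ℝ) (hμmin : 0 < μmin)
    (hbound : ∀ u : ℝ, μmin ≤ deriv μ u ∧ deriv μ u ≤ μmax)
    (𝒳 : Finset (Fin d → ℝ)) (h𝒳ne : 𝒳.Nonempty)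
    (h𝒳norm : ∀ X ∈ 𝒳, Real.sqrt (∑ i, X i ^ 2) ≤ 1)
    (X : Fin t → (Fin d → ℝ)) (hX : ∀ l, X l ∈ 𝒳)
    (H : (Fin d → ℝ) → Matrix (Fin d) (Fin d) ℝ)
    (hH : ∀ θ, H θ = ∑ l, deriv μ (X l ⬝ᵥ θ) • vecMulVec (X l) (X l)
        + lam • (1 : Matrix (Fin d) (Fin d) ℝ))
    (f : (Fin d → ℝ) → (Fin d → ℝ))
    (hf : ∀ θ, f θ = ∑ l, μ (X l ⬝ᵥ θ) • X l + lam • θ)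
    (G : Matrix (Fin d) (Fin d) ℝ)
    (hG : G = ∑ l, vecMulVec (X l) (X l) + (lam / μmin) • (1 : Matrix (Fin d) (Fin d) ℝ)) :
    ∀ θ θ' θ'' : Fin d → ℝ,
      Real.sqrt ((θ - θ') ⬝ᵥ (H θ'').mulVec (θ - θ'))
        ≤ Real.sqrt μmax * μmin⁻¹ *
          Real.sqrt ((f θ - f θ') ⬝ᵥ G⁻¹.mulVec (f θ - f θ')) := by
  have hμmax : 0 < μmax := lt_of_lt_of_le hμmin ((hbound 0).1.trans (hbound 0).2)
  have hminmax : μmin ≤ μmax := (hbound 0).1.trans (hbound 0).2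
  -- rewrite G in smul-one form
  have hG' : G = ∑ l, (1 : ℝ) • vecMulVec (X l) (X l)
      + (lam / μmin) • (1 : Matrix (Fin d) (Fin d) ℝ) := by
    simpa [one_smul] using hG
  have hGq : ∀ x : Fin d → ℝ,
      x ⬝ᵥ G *ᵥ x = (∑ l, (X l ⬝ᵥ x) ^ 2) + (lam / μmin) * (x ⬝ᵥ x) := by
    intro x
    rw [hG', quad_expand]
    simp
  have hdotself : ∀ x : Fin d → ℝ, 0 ≤ x ⬝ᵥ x := fun x =>
    Finset.sum_nonneg fun i _ => mul_self_nonneg _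
  -- G is positive definite
  have hGsymT : Gᵀ = G := by
    rw [hG]
    rw [transpose_add, transpose_sum, transpose_smul, transpose_one]
    congr 1
    exact Finset.sum_congr rfl fun l _ => my_vecMulVec_transpose _
  have hGpd : G.PosDef := by
    refine Matrix.PosDef.of_dotProduct_mulVec_pos ?_ ?_
    · rw [Matrix.IsHermitian, conjTranspose_eq_transpose_of_trivial, hGsymT]
    · intro x hx
      rw [star_trivial, hGq x]
      have hxx : 0 < x ⬝ᵥ x := by
        rcases Function.ne_iff.mp hx with ⟨i, hi⟩
        exact Finset.sum_pos' (fun j _ => mul_self_nonneg _)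
          ⟨i, Finset.mem_univ i, mul_self_pos.mpr hi⟩
      have hsum : 0 ≤ ∑ l, (X l ⬝ᵥ x) ^ 2 := Finset.sum_nonneg fun l _ => sq_nonneg _
      have hq : 0 < lam / μmin := div_pos hlam hμmin
      nlinarith
  have hdet : IsUnit G.det := (Matrix.isUnit_iff_isUnit_det G).mp hGpd.isUnit
  have hinv_mul : G⁻¹ * G = 1 := Matrix.nonsing_inv_mul G hdet
  have hmul_inv : G * G⁻¹ = 1 := Matrix.mul_nonsing_inv G hdet
  have hGinv : G⁻¹.PosDef := hGpd.inv
  have hGinvPSD : ∀ x : Fin d → ℝ, 0 ≤ x ⬝ᵥ G⁻¹ *ᵥ x := by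
    intro x
    have := hGinv.posSemidef.dotProduct_mulVec_nonneg x
    rwa [star_trivial] at this
  have hGPSD : ∀ x : Fin d → ℝ, 0 ≤ x ⬝ᵥ G *ᵥ x := by
    intro x
    have := hGpd.posSemidef.dotProduct_mulVec_nonneg x
    rwa [star_trivial] at this
  intro θ θ' θ''
  set v : Fin d → ℝ := θ - θ' with hv
  set w : Fin d → ℝ := f θ - f θ' with hw
  set q : ℝ := v ⬝ᵥ G *ᵥ v with hqdef
  set Nsq : ℝ := w ⬝ᵥ G⁻¹ *ᵥ w with hNdef
  have hq0 : 0 ≤ q := hGPSD v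
  have hN0 : 0 ≤ Nsq := hGinvPSD w
  -- Step 1 : v H v ≤ μmax * q
  have hHq : v ⬝ᵥ (H θ'') *ᵥ v
      = (∑ l, deriv μ (X l ⬝ᵥ θ'') * (X l ⬝ᵥ v) ^ 2) + lam * (v ⬝ᵥ v) := by
    rw [hH θ'', quad_expand]
  have h1 : v ⬝ᵥ (H θ'') *ᵥ v ≤ μmax * q := by
    rw [hHq, hqdef, hGq v, mul_add, Finset.mul_sum]
    refine add_le_add (Finset.sum_le_sum fun l _ => ?_) ?_
    · exact mul_le_mul_of_nonneg_right (hbound _).2 (sq_nonneg _)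
    · rw [← mul_assoc]
      have hvv := hdotself v
      have : lam ≤ μmax * (lam / μmin) := by
        rw [mul_div_assoc']
        rw [le_div_iff₀ hμmin]
        nlinarith
      exact mul_le_mul_of_nonneg_right this hvv
  -- Step 2 : μmin * q ≤ w ⬝ᵥ v
  have hwv : w ⬝ᵥ v
      = (∑ l, (μ (X l ⬝ᵥ θ) - μ (X l ⬝ᵥ θ')) * (X l ⬝ᵥ v)) + lam * (v ⬝ᵥ v) := by
    rw [hw, hf θ, hf θ']
    have : (∑ l, μ (X l ⬝ᵥ θ) • X l + lam • θ) - (∑ l, μ (X l ⬝ᵥ θ') • X l + lam • θ')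
        = (∑ l, (μ (X l ⬝ᵥ θ) - μ (X l ⬝ᵥ θ')) • X l) + lam • v := by
      rw [hv]
      rw [Finset.sum_congr rfl fun l (_ : l ∈ Finset.univ) =>
        (sub_smul (μ (X l ⬝ᵥ θ)) (μ (X l ⬝ᵥ θ')) (X l))]
      rw [Finset.sum_sub_distrib, smul_sub]
      abel
    rw [this, add_dotProduct, my_sum_dot]
    congr 1
    · exact Finset.sum_congr rfl fun l _ => by rw [smul_dotProduct, smul_eq_mul]
    · rw [smul_dotProduct, smul_eq_mul]
  have h2 : μmin * q ≤ w ⬝ᵥ v := by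
    rw [hwv, hqdef, hGq v, mul_add, Finset.mul_sum]
    refine add_le_add (Finset.sum_le_sum fun l _ => ?_) ?_
    · have hab : X l ⬝ᵥ θ - X l ⬝ᵥ θ' = X l ⬝ᵥ v := by
        rw [hv, dotProduct_sub]
      have := mono_aux μ hdiff μmin (fun u => (hbound u).1) (X l ⬝ᵥ θ) (X l ⬝ᵥ θ')
      rwa [hab] at this
    · rw [← mul_assoc, mul_div_cancel₀ _ (ne_of_gt hμmin)]
  -- Step 3 : Cauchy-Schwarz
  have hCS : (w ⬝ᵥ v) ^ 2 ≤ Nsq * q := by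
    rcases eq_or_lt_of_le hq0 with hq | hq
    · -- q = 0 forces v = 0
      have hv0 : v = 0 := by
        by_contra hv0
        have hpos := hGpd.dotProduct_mulVec_pos hv0
        rw [star_trivial, ← hqdef, ← hq] at hpos
        exact lt_irrefl 0 hpos
      rw [hv0, dotProduct_zero, ← hq]
      simp
    · set c : ℝ := w ⬝ᵥ v with hc
      set u : Fin d → ℝ := q • w - c • (G *ᵥ v) with hu
      have h0 : 0 ≤ u ⬝ᵥ G⁻¹ *ᵥ u := hGinvPSD u
      have e1 : G⁻¹ *ᵥ (G *ᵥ v) = v := by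
        rw [Matrix.mulVec_mulVec, hinv_mul, one_mulVec]
      have e2 : (G *ᵥ v) ⬝ᵥ (G⁻¹ *ᵥ w) = c := by
        rw [dotProduct_comm, Matrix.dotProduct_mulVec, ← Matrix.mulVec_transpose, hGsymT,
          Matrix.mulVec_mulVec, hmul_inv, one_mulVec, dotProduct_comm, hc]
        exact dotProduct_comm v w
      have e3 : (G *ᵥ v) ⬝ᵥ v = q := by
        rw [dotProduct_comm, hqdef]
      have e5 : G⁻¹ *ᵥ u = q • (G⁻¹ *ᵥ w) - c • v := by
        rw [hu, mulVec_sub, Matrix.mulVec_smul, Matrix.mulVec_smul, e1]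
      have hexp : u ⬝ᵥ G⁻¹ *ᵥ u = q ^ 2 * Nsq - q * c ^ 2 := by
        rw [e5, hu, sub_dotProduct, dotProduct_sub, dotProduct_sub]
        have e6 : w ⬝ᵥ (G⁻¹ *ᵥ w) = Nsq := hNdef.symm
        have e7 : w ⬝ᵥ v = c := hc.symm
        simp only [smul_dotProduct, dotProduct_smul, smul_eq_mul, e2, e3, e6, e7]
        ring
      rw [hexp] at h0
      nlinarith [h0, hq]
  -- Combine
  have h3 : μmin ^ 2 * q ^ 2 ≤ Nsq * q := by
    have hwv0 : 0 ≤ w ⬝ᵥ v := le_trans (by positivity) h2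
    have hsq : (μmin * q) ^ 2 ≤ (w ⬝ᵥ v) ^ 2 :=
      pow_le_pow_left₀ (by positivity) h2 2
    nlinarith [hsq, hCS]
  have h4 : μmin ^ 2 * q ≤ Nsq := by
    rcases eq_or_lt_of_le hq0 with hq | hq
    · rw [← hq, mul_zero]; exact hN0
    · nlinarith [h3]
  have key : v ⬝ᵥ (H θ'') *ᵥ v ≤ μmax * (μmin⁻¹ ^ 2 * Nsq) := by
    have hq' : q ≤ μmin⁻¹ ^ 2 * Nsq := by
      rw [← sub_nonneg] at h4 ⊢
      have : μmin⁻¹ ^ 2 * Nsq - q = μmin⁻¹ ^ 2 * (Nsq - μmin ^ 2 * q) := by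
        field_simp
      rw [this]
      positivity
    calc v ⬝ᵥ (H θ'') *ᵥ v ≤ μmax * q := h1
      _ ≤ μmax * (μmin⁻¹ ^ 2 * Nsq) := mul_le_mul_of_nonneg_left hq' hμmax.le
  calc Real.sqrt (v ⬝ᵥ (H θ'') *ᵥ v)
      ≤ Real.sqrt (μmax * (μmin⁻¹ ^ 2 * Nsq)) := Real.sqrt_le_sqrt key
    _ = Real.sqrt μmax * μmin⁻¹ * Real.sqrt Nsq := by
        rw [Real.sqrt_mul hμmax.le, Real.sqrt_mul (by positivity : (0:ℝ) ≤ μmin⁻¹ ^ 2),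
          Real.sqrt_sq (by positivity : (0:ℝ) ≤ μmin⁻¹)]
        ring
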